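/- Let f1, f2 be probability distributions supported on [0,1] with equal means. Then sup over 1-Lipschitz convex functions U : [0,1] → ℝ of ∫ U d f1 − ∫ U d f2 equals 2 · max over t ∈ [0,1] of (S1(t) − S2(t)), where Si(t) := ∫₀ᵗ Fi(p) dp is the integral of the CDF of fi. -/

import Mathlib

open MeasureTheory ProbabilityTheory Set ENNReal

lemma ae_mem_Icc' (f : Measure ℝ) [IsProbabilityMeasure f] (h : f (Icc 0 1) = 1) :
    ∀ᵐ p ∂f, p ∈ Icc (0:ℝ) 1 := by
  rw [ae_iff]
  have : {p : ℝ | ¬ p ∈ Icc (0:ℝ) 1} = (Icc (0:ℝ) 1)ᶜ := rfl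
  rw [this, prob_compl_eq_zero_iff measurableSet_Icc]
  exact h

lemma integrable_of_ae_bound {f : Measure ℝ} [IsFiniteMeasure f] {g : ℝ → ℝ} {C : ℝ}
    (hm : AEStronglyMeasurable g f) (hb : ∀ᵐ p ∂f, |g p| ≤ C) : Integrable g f :=
  Integrable.mono' (integrable_const C) hm (by simpa [Real.norm_eq_abs] using hb)

section pieces
variable (f : Measure ℝ) [IsProbabilityMeasure f] (h : f (Icc 0 1) = 1)

lemma int_id (h : f (Icc 0 1) = 1) : Integrable (fun p : ℝ => p) f :=
  integrable_of_ae_bound (C := 1) aestronglyMeasurable_id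
    ((ae_mem_Icc' f h).mono fun p hp => abs_le.2 ⟨by linarith [hp.1], hp.2⟩)

lemma int_maxt (h : f (Icc 0 1) = 1) {t : ℝ} (ht : t ∈ Icc (0:ℝ) 1) :
    Integrable (fun p : ℝ => max (t - p) 0) f :=
  integrable_of_ae_bound (C := 1)
    ((continuous_const.sub continuous_id).max continuous_const).aestronglyMeasurable
    ((ae_mem_Icc' f h).mono fun p hp => abs_le.2
      ⟨le_trans (by norm_num) (le_max_right _ _), max_le (by linarith [hp.1, ht.2]) (by norm_num)⟩)

lemma int_maxp (h : f (Icc 0 1) = 1) {t : ℝ} (ht : t ∈ Icc (0:ℝ) 1) :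
    Integrable (fun p : ℝ => max (p - t) 0) f :=
  integrable_of_ae_bound (C := 1)
    ((continuous_id.sub continuous_const).max continuous_const).aestronglyMeasurable
    ((ae_mem_Icc' f h).mono fun p hp => abs_le.2
      ⟨le_trans (by norm_num) (le_max_right _ _), max_le (by linarith [hp.2, ht.1]) (by norm_num)⟩)
end pieces

lemma scdf_eq (f : Measure ℝ) [IsProbabilityMeasure f] (h : f (Icc 0 1) = 1)
    {t : ℝ} (ht : t ∈ Icc (0:ℝ) 1) :
    ∫ p, max (t - p) 0 ∂f = ∫ u in (0:ℝ)..t, cdf f u := by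
  have hae := ae_mem_Icc' f h
  -- RHS as lintegral
  have hmeas : Measurable fun u : ℝ => f (Iic u) := by
    have : (fun u : ℝ => f (Iic u)) = fun u => ENNReal.ofReal (cdf f u) := by
      ext u; rw [ofReal_cdf]
    rw [this]
    exact ENNReal.measurable_ofReal.comp (monotone_cdf f).measurable
  have hR : ∫ u in (0:ℝ)..t, cdf f u
      = (∫⁻ u in Ioc (0:ℝ) t, f (Iic u)).toReal := by
    rw [intervalIntegral.integral_of_le ht.1]
    rw [← integral_toReal (hmeas.aemeasurable.restrict)
      (ae_of_all _ fun u => (prob_le_one).trans_lt ENNReal.one_lt_top)]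
    exact setIntegral_congr_fun measurableSet_Ioc fun u _ => cdf_eq_real f u
  -- swap
  have hswap : ∫⁻ u in Ioc (0:ℝ) t, f (Iic u)
      = ∫⁻ p, ENNReal.ofReal (max (t - p) 0) ∂f := by
    have h1 : ∀ u : ℝ, f (Iic u) = ∫⁻ p, (if p ≤ u then (1:ℝ≥0∞) else 0) ∂f := by
      intro u
      rw [← lintegral_indicator_one measurableSet_Iic]
      exact lintegral_congr fun p => by simp [Set.indicator_apply]
    calc ∫⁻ u in Ioc (0:ℝ) t, f (Iic u)
        = ∫⁻ u in Ioc (0:ℝ) t, ∫⁻ p, (if p ≤ u then (1:ℝ≥0∞) else 0) ∂f := by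
          exact lintegral_congr fun u => h1 u
      _ = ∫⁻ p, (∫⁻ u in Ioc (0:ℝ) t, (if p ≤ u then (1:ℝ≥0∞) else 0)) ∂f := by
          have hAE : AEMeasurable
              (Function.uncurry fun (u p : ℝ) => if p ≤ u then (1:ℝ≥0∞) else 0)
              ((volume.restrict (Ioc (0:ℝ) t)).prod f) :=
            (Measurable.ite (measurableSet_le measurable_snd measurable_fst)
              measurable_const measurable_const).aemeasurable
          exact lintegral_lintegral_swap hAE
      _ = ∫⁻ p, ENNReal.ofReal (max (t - p) 0) ∂f := by
          refine lintegral_congr_ae (hae.mono fun p hp => ?_)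
          show (∫⁻ u in Ioc (0:ℝ) t, (if p ≤ u then (1:ℝ≥0∞) else 0))
              = ENNReal.ofReal (max (t - p) 0)
          have hfun : (fun u : ℝ => (if p ≤ u then (1:ℝ≥0∞) else 0))
              = (Ici p).indicator (fun _ => 1) := by
            ext u; simp [Set.indicator_apply]
          have : ∫⁻ u in Ioc (0:ℝ) t, (if p ≤ u then (1:ℝ≥0∞) else 0)
              = volume (Ici p ∩ Ioc 0 t) := by
            rw [hfun, lintegral_indicator measurableSet_Ici, setLIntegral_one,
              Measure.restrict_apply measurableSet_Ici]
          rw [this]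
          rcases le_or_gt p t with hpt | hpt
          · have hs1 : Ioc p t ⊆ Ici p ∩ Ioc 0 t :=
              fun u hu => ⟨le_of_lt hu.1, lt_of_le_of_lt hp.1 hu.1, hu.2⟩
            have hs2 : Ici p ∩ Ioc 0 t ⊆ Icc p t := fun u hu => ⟨hu.1, hu.2.2⟩
            have hm1 := measure_mono (μ := volume) hs1
            have hm2 := measure_mono (μ := volume) hs2
            rw [Real.volume_Ioc] at hm1
            rw [Real.volume_Icc] at hm2
            rw [max_eq_left (by linarith)]
            exact le_antisymm hm2 hm1
          · have hemp : Ici p ∩ Ioc 0 t ⊆ (∅ : Set ℝ) :=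
              fun u hu => absurd (hu.1.trans hu.2.2) (not_le.2 hpt)
            rw [max_eq_right (by linarith), measure_mono_null (μ := volume) hemp measure_empty]
            simp
  rw [hR, hswap]
  exact integral_eq_lintegral_of_nonneg_ae (f := fun p => max (t - p) 0)
    (ae_of_all _ fun p => le_max_right _ _)
    ((continuous_const.sub continuous_id).max continuous_const).aestronglyMeasurable


lemma integral_max_sub (f : Measure ℝ) [IsProbabilityMeasure f] (h : f (Icc 0 1) = 1)
    {t : ℝ} (ht : t ∈ Icc (0:ℝ) 1) :
    ∫ p, max (p - t) 0 ∂f = (∫ p, p ∂f) - t + ∫ u in (0:ℝ)..t, cdf f u := by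
  have hpt : (fun p : ℝ => max (p - t) 0) = fun p => (p - t) + max (t - p) 0 := by
    ext p
    rcases le_total p t with h' | h'
    · rw [max_eq_right (by linarith), max_eq_left (by linarith)]; ring
    · rw [max_eq_left (by linarith), max_eq_right (by linarith)]; ring
  have hsub : Integrable (fun p : ℝ => p - t) f := (int_id f h).sub (integrable_const t)
  rw [hpt, integral_add hsub (int_maxt f h ht),
    (integral_sub (int_id f h) (integrable_const t) : ∫ p, (p - t) ∂f = _), integral_const, scdf_eq f h ht]
  simp

lemma integral_abs_sub (f : Measure ℝ) [IsProbabilityMeasure f] (h : f (Icc 0 1) = 1)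
    {t : ℝ} (ht : t ∈ Icc (0:ℝ) 1) :
    ∫ p, |p - t| ∂f = (∫ p, p ∂f) - t + 2 * ∫ u in (0:ℝ)..t, cdf f u := by
  have hpt : (fun p : ℝ => |p - t|) = fun p => (p - t) + (2:ℝ) * max (t - p) 0 := by
    ext p
    rcases le_total p t with h' | h'
    · rw [abs_of_nonpos (by linarith), max_eq_left (by linarith)]; ring
    · rw [abs_of_nonneg (by linarith), max_eq_right (by linarith)]; ring
  have hsub : Integrable (fun p : ℝ => p - t) f := (int_id f h).sub (integrable_const t)
  rw [hpt, integral_add hsub ((int_maxt f h ht).const_mul 2),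
    (integral_sub (int_id f h) (integrable_const t) : ∫ p, (p - t) ∂f = _), integral_const,
    MeasureTheory.integral_const_mul, scdf_eq f h ht]
  simp

variable {f1 f2 : Measure ℝ} [IsProbabilityMeasure f1] [IsProbabilityMeasure f2]

lemma diff_integral_max (h1 : f1 (Icc 0 1) = 1) (h2 : f2 (Icc 0 1) = 1)
    (hmean : ∫ p, p ∂f1 = ∫ p, p ∂f2) {t : ℝ} (ht : t ∈ Icc (0:ℝ) 1) :
    (∫ p, max (p - t) 0 ∂f1) - ∫ p, max (p - t) 0 ∂f2
      = (∫ u in (0:ℝ)..t, cdf f1 u) - ∫ u in (0:ℝ)..t, cdf f2 u := by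
  rw [integral_max_sub f1 h1 ht, integral_max_sub f2 h2 ht, hmean]; ring

lemma diff_integral_abs (h1 : f1 (Icc 0 1) = 1) (h2 : f2 (Icc 0 1) = 1)
    (hmean : ∫ p, p ∂f1 = ∫ p, p ∂f2) {t : ℝ} (ht : t ∈ Icc (0:ℝ) 1) :
    (∫ p, |p - t| ∂f1) - ∫ p, |p - t| ∂f2
      = 2 * ((∫ u in (0:ℝ)..t, cdf f1 u) - ∫ u in (0:ℝ)..t, cdf f2 u) := by
  rw [integral_abs_sub f1 h1 ht, integral_abs_sub f2 h2 ht, hmean]; ring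

lemma lips_abs_le {U : ℝ → ℝ} (hU : LipschitzOnWith 1 U (Icc 0 1)) {x y : ℝ}
    (hx : x ∈ Icc (0:ℝ) 1) (hy : y ∈ Icc (0:ℝ) 1) : |U x - U y| ≤ |x - y| := by
  have := hU.dist_le_mul x hx y hy
  simpa [Real.dist_eq] using this

lemma integrable_lips (f : Measure ℝ) [IsProbabilityMeasure f] (h : f (Icc 0 1) = 1)
    {U : ℝ → ℝ} (hU : LipschitzOnWith 1 U (Icc 0 1)) : Integrable U f := by
  have h0 : (0:ℝ) ∈ Icc (0:ℝ) 1 := ⟨le_refl 0, zero_le_one⟩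
  set π : ℝ → ℝ := fun p => min (max p 0) 1 with hπ
  have hπc : Continuous π := (continuous_id.max continuous_const).min continuous_const
  have hπm : ∀ p, π p ∈ Icc (0:ℝ) 1 :=
    fun p => ⟨le_min (le_max_right p 0) zero_le_one, min_le_right _ _⟩
  have hcomp : Continuous (fun p => U (π p)) :=
    (hU.continuousOn).comp_continuous hπc hπm
  have hae : U =ᵐ[f] fun p => U (π p) := (ae_mem_Icc' f h).mono fun p hp => by
    have hpe : π p = p := by
      simp only [hπ]; rw [max_eq_left hp.1, min_eq_left hp.2]
    show U p = U (π p)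
    rw [hpe]
  refine integrable_of_ae_bound (C := |U 0| + 1)
    (hcomp.aestronglyMeasurable.congr hae.symm) ?_
  refine (ae_mem_Icc' f h).mono fun p hp => ?_
  have h1 : |U p - U 0| ≤ |p - 0| := lips_abs_le hU hp h0
  have h2 : |p - 0| ≤ 1 := by rw [sub_zero]; exact abs_le.2 ⟨by linarith [hp.1], hp.2⟩
  calc |U p| = |U 0 + (U p - U 0)| := by ring_nf
    _ ≤ |U 0| + |U p - U 0| := abs_add_le _ _
    _ ≤ |U 0| + 1 := by linarith

section chunk1
variable {U : ℝ → ℝ} {n : ℕ}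

lemma node_mem {n : ℕ} (hn : 1 ≤ n) {x : ℝ} (hx0 : 0 ≤ x) (hxn : x ≤ n) :
    x / n ∈ Icc (0:ℝ) 1 := by
  have hn0 : (0:ℝ) < n := by exact_mod_cast hn
  exact ⟨by positivity, by rw [div_le_one hn0]; exact hxn⟩

lemma cb_abs (hUl : LipschitzOnWith 1 U (Icc 0 1)) (hn : 1 ≤ n) {k : ℕ} (hk : k + 1 ≤ n) :
    |(n:ℝ) * (U (((k:ℝ)+1)/n) - U ((k:ℝ)/n))| ≤ 1 := by
  have hn0 : (0:ℝ) < n := by exact_mod_cast hn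
  have hkn : ((k:ℝ)+1) ≤ n := by exact_mod_cast hk
  have hm1 : ((k:ℝ)+1)/n ∈ Icc (0:ℝ) 1 := node_mem hn (by positivity) hkn
  have hm2 : (k:ℝ)/n ∈ Icc (0:ℝ) 1 := node_mem hn (by positivity) (by linarith)
  have h1 := lips_abs_le hUl hm1 hm2
  have he : |((k:ℝ)+1)/n - (k:ℝ)/n| = 1/n := by
    rw [div_sub_div_same]
    rw [show (k:ℝ) + 1 - k = 1 by ring]
    exact abs_of_pos (by positivity)
  rw [abs_mul, abs_of_pos hn0]
  calc (n:ℝ) * |U (((k:ℝ)+1)/n) - U ((k:ℝ)/n)| ≤ n * (1/n) := by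
        refine mul_le_mul_of_nonneg_left ?_ hn0.le
        rw [← he]; exact h1
    _ = 1 := by field_simp

lemma cb_mono (hUc : ConvexOn ℝ (Icc 0 1) U) (hn : 1 ≤ n) {j : ℕ} (hj : j + 2 ≤ n) :
    (n:ℝ) * (U (((j:ℝ)+1)/n) - U ((j:ℝ)/n))
      ≤ (n:ℝ) * (U (((j:ℝ)+2)/n) - U (((j:ℝ)+1)/n)) := by
  have hn0 : (0:ℝ) < n := by exact_mod_cast hn
  have hjn : ((j:ℝ)+2) ≤ n := by exact_mod_cast hj
  have hm1 : (j:ℝ)/n ∈ Icc (0:ℝ) 1 := node_mem hn (by positivity) (by linarith)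
  have hm3 : ((j:ℝ)+2)/n ∈ Icc (0:ℝ) 1 := node_mem hn (by positivity) hjn
  have hxy : (j:ℝ)/n < ((j:ℝ)+1)/n := (div_lt_div_iff_of_pos_right hn0).2 (by linarith)
  have hyz : ((j:ℝ)+1)/n < ((j:ℝ)+2)/n := (div_lt_div_iff_of_pos_right hn0).2 (by linarith)
  have hs := hUc.slope_mono_adjacent hm1 hm3 hxy hyz
  have e1 : ((j:ℝ)+1)/n - (j:ℝ)/n = 1/n := by rw [div_sub_div_same]; ring_nf
  have e2 : ((j:ℝ)+2)/n - ((j:ℝ)+1)/n = 1/n := by rw [div_sub_div_same]; ring_nf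
  rw [e1, e2] at hs
  have hs2 := (div_le_div_iff_of_pos_right (show (0:ℝ) < 1/n by positivity)).1 hs
  exact mul_le_mul_of_nonneg_left hs2 hn0.le
end chunk1
noncomputable def Vfun (U0 : ℝ) (c : ℕ → ℝ) (n : ℕ) (p : ℝ) : ℝ :=
  U0 + c 0 * p + ∑ j ∈ Finset.range (n-1), (c (j+1) - c j) * max (p - ((j:ℝ)+1)/n) 0

lemma Vfun_diff {U0 : ℝ} {c : ℕ → ℝ} {n : ℕ} (hn : 1 ≤ n) {k : ℕ} (hk : k + 1 ≤ n) {p : ℝ}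
    (hp1 : (k:ℝ)/n ≤ p) (hp2 : p ≤ ((k:ℝ)+1)/n) :
    Vfun U0 c n p - Vfun U0 c n ((k:ℝ)/n) = c k * (p - (k:ℝ)/n) := by
  have hn0 : (0:ℝ) < n := by exact_mod_cast hn
  have step1 : Vfun U0 c n p - Vfun U0 c n ((k:ℝ)/n)
      = c 0 * (p - (k:ℝ)/n) + ∑ j ∈ Finset.range (n-1),
          ((c (j+1) - c j) * max (p - ((j:ℝ)+1)/n) 0
            - (c (j+1) - c j) * max ((k:ℝ)/n - ((j:ℝ)+1)/n) 0) := by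
    unfold Vfun; rw [Finset.sum_sub_distrib]; ring
  rw [step1]
  have hsub : Finset.range k ⊆ Finset.range (n-1) := Finset.range_subset_range.2 (by omega)
  have hzero : ∀ j ∈ Finset.range (n-1), j ∉ Finset.range k →
      (c (j+1) - c j) * max (p - ((j:ℝ)+1)/n) 0
        - (c (j+1) - c j) * max ((k:ℝ)/n - ((j:ℝ)+1)/n) 0 = 0 := by
    intro j _ hjk
    have hkj : k ≤ j := by simpa using hjk
    have hkjr : (k:ℝ) ≤ (j:ℝ) := by exact_mod_cast hkj
    have hm1 : p - ((j:ℝ)+1)/n ≤ 0 := by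
      have : ((k:ℝ)+1)/n ≤ ((j:ℝ)+1)/n := (div_le_div_iff_of_pos_right hn0).2 (by linarith)
      linarith
    have hm2 : (k:ℝ)/n - ((j:ℝ)+1)/n ≤ 0 := by
      have : (k:ℝ)/n ≤ ((j:ℝ)+1)/n := (div_le_div_iff_of_pos_right hn0).2 (by linarith)
      linarith
    rw [max_eq_right hm1, max_eq_right hm2]
    ring
  rw [← Finset.sum_subset hsub hzero]
  have hcongr : ∀ j ∈ Finset.range k,
      (c (j+1) - c j) * max (p - ((j:ℝ)+1)/n) 0
        - (c (j+1) - c j) * max ((k:ℝ)/n - ((j:ℝ)+1)/n) 0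
      = (c (j+1) - c j) * (p - (k:ℝ)/n) := by
    intro j hj
    have hjk : j < k := Finset.mem_range.1 hj
    have hjkr : (j:ℝ) + 1 ≤ (k:ℝ) := by exact_mod_cast hjk
    have hle : ((j:ℝ)+1)/n ≤ (k:ℝ)/n := (div_le_div_iff_of_pos_right hn0).2 hjkr
    rw [max_eq_left (by linarith), max_eq_left (by linarith)]
    ring
  rw [Finset.sum_congr rfl hcongr, ← Finset.sum_mul, Finset.sum_range_sub]
  ring

lemma Vfun_zero {U0 : ℝ} {c : ℕ → ℝ} {n : ℕ} (hn : 1 ≤ n) : Vfun U0 c n 0 = U0 := by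
  have hn0 : (0:ℝ) < n := by exact_mod_cast hn
  unfold Vfun
  have hz : ∀ j ∈ Finset.range (n-1), (c (j+1) - c j) * max ((0:ℝ) - ((j:ℝ)+1)/n) 0 = 0 := by
    intro j _
    rw [max_eq_right (sub_nonpos.2 (by positivity))]
    ring
  rw [Finset.sum_eq_zero hz]
  ring
lemma Vfun_node {U : ℝ → ℝ} {n : ℕ} (hn : 1 ≤ n)
    (c : ℕ → ℝ) (hc : ∀ k, c k = n * (U (((k:ℝ)+1)/n) - U ((k:ℝ)/n))) :
    ∀ k, k ≤ n → Vfun (U 0) c n ((k:ℝ)/n) = U ((k:ℝ)/n) := by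
  have hn0 : (0:ℝ) < n := by exact_mod_cast hn
  intro k
  induction k with
  | zero => intro _; simp only [Nat.cast_zero, zero_div]; exact Vfun_zero hn
  | succ k ih =>
    intro hk
    have hk' : k ≤ n := by omega
    have hd := Vfun_diff (U0 := U 0) (c := c) hn hk
      (p := ((k:ℝ)+1)/n) ((div_le_div_iff_of_pos_right hn0).2 (by linarith)) le_rfl
    have e1 : ((k:ℝ)+1)/n - (k:ℝ)/n = 1/n := by rw [div_sub_div_same]; ring_nf
    have e2 : c k * (((k:ℝ)+1)/n - (k:ℝ)/n) = U (((k:ℝ)+1)/n) - U ((k:ℝ)/n) := by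
      rw [e1, hc k]; field_simp
    push_cast
    have := ih hk'
    linarith [hd, e2]

lemma Vfun_approx {U : ℝ → ℝ} {n : ℕ} (hn : 1 ≤ n)
    (hUl : LipschitzOnWith 1 U (Icc 0 1))
    (c : ℕ → ℝ) (hc : ∀ k, c k = n * (U (((k:ℝ)+1)/n) - U ((k:ℝ)/n)))
    {p : ℝ} (hp : p ∈ Icc (0:ℝ) 1) : |U p - Vfun (U 0) c n p| ≤ 2 / n := by
  have hn0 : (0:ℝ) < n := by exact_mod_cast hn
  -- find the subinterval
  obtain ⟨k, hk1, hkp, hpk⟩ : ∃ k : ℕ, k + 1 ≤ n ∧ (k:ℝ)/n ≤ p ∧ p ≤ ((k:ℝ)+1)/n := by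
    refine ⟨min (Nat.floor (p * n)) (n-1), by omega, ?_, ?_⟩
    · rw [div_le_iff₀ hn0]
      calc ((min (Nat.floor (p * n)) (n-1) : ℕ) : ℝ) ≤ ((Nat.floor (p * n) : ℕ) : ℝ) := by
            exact_mod_cast min_le_left _ _
        _ ≤ p * n := Nat.floor_le (mul_nonneg hp.1 hn0.le)
    · rcases min_cases (Nat.floor (p * n)) (n-1) with ⟨hmin, _⟩ | ⟨hmin, hge⟩
      · rw [hmin]
        have hfl := Nat.lt_floor_add_one (p * n)
        rw [le_div_iff₀ hn0]
        linarith
      · rw [hmin]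
        have : ((n - 1 : ℕ) : ℝ) + 1 = n := by
          have : (1:ℕ) ≤ n := hn
          push_cast [Nat.cast_sub this]
          ring
        rw [this, div_self hn0.ne']
        exact hp.2
  have hkn : ((k:ℝ)+1) ≤ n := by exact_mod_cast hk1
  have hmk : (k:ℝ)/n ∈ Icc (0:ℝ) 1 := node_mem hn (by positivity) (by linarith)
  have hnode := Vfun_node hn c hc k (by omega)
  have hd := Vfun_diff (U0 := U 0) (c := c) hn hk1 hkp hpk
  have hlip : |U p - U ((k:ℝ)/n)| ≤ |p - (k:ℝ)/n| := lips_abs_le hUl hp hmk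
  have hgap : p - (k:ℝ)/n ≤ 1/n := by
    have : ((k:ℝ)+1)/n - (k:ℝ)/n = 1/n := by rw [div_sub_div_same]; ring_nf
    linarith
  have hgap0 : 0 ≤ p - (k:ℝ)/n := by linarith
  have hcb : |c k| ≤ 1 := by rw [hc k]; exact cb_abs hUl hn hk1
  calc |U p - Vfun (U 0) c n p|
      = |(U p - U ((k:ℝ)/n)) - (Vfun (U 0) c n p - Vfun (U 0) c n ((k:ℝ)/n))| := by
        rw [hnode]; ring_nf
    _ ≤ |U p - U ((k:ℝ)/n)| + |Vfun (U 0) c n p - Vfun (U 0) c n ((k:ℝ)/n)| := abs_sub _ _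
    _ ≤ (1/(n:ℝ)) + (1/(n:ℝ)) := by
        have hV : |Vfun (U 0) c n p - Vfun (U 0) c n ((k:ℝ)/n)| ≤ 1/(n:ℝ) := by
          rw [hd, abs_mul]
          calc |c k| * |p - (k:ℝ)/n| ≤ 1 * (1/(n:ℝ)) := by
                refine mul_le_mul hcb ?_ (abs_nonneg _) zero_le_one
                rw [abs_of_nonneg hgap0]; exact hgap
            _ = 1/(n:ℝ) := by ring
        have hU' : |U p - U ((k:ℝ)/n)| ≤ 1/(n:ℝ) :=
          hlip.trans (by rw [abs_of_nonneg hgap0]; exact hgap)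
        linarith
    _ = 2 / n := by ring
lemma Vfun_integral (f : Measure ℝ) [IsProbabilityMeasure f] (h : f (Icc 0 1) = 1)
    {n : ℕ} (hn : 1 ≤ n) (U0 : ℝ) (c : ℕ → ℝ) :
    Integrable (Vfun U0 c n) f ∧
    ∫ p, Vfun U0 c n p ∂f = U0 + c 0 * (∫ p, p ∂f)
      + ∑ j ∈ Finset.range (n-1), (c (j+1) - c j) * ∫ p, max (p - ((j:ℝ)+1)/n) 0 ∂f := by
  have hn0 : (0:ℝ) < n := by exact_mod_cast hn
  have hmemj : ∀ j ∈ Finset.range (n-1), (((j:ℝ)+1)/n) ∈ Icc (0:ℝ) 1 := by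
    intro j hj
    have hj1 : j + 1 ≤ n := by have := Finset.mem_range.1 hj; omega
    exact node_mem hn (by positivity) (by exact_mod_cast hj1)
  have ha : Integrable (fun _ : ℝ => U0) f := integrable_const U0
  have hb : Integrable (fun p : ℝ => c 0 * p) f := (int_id f h).const_mul _
  have hab : Integrable (fun p : ℝ => U0 + c 0 * p) f := ha.add hb
  have hintj : ∀ j ∈ Finset.range (n-1),
      Integrable (fun p : ℝ => (c (j+1) - c j) * max (p - ((j:ℝ)+1)/n) 0) f :=
    fun j hj => (int_maxp f h (hmemj j hj)).const_mul _
  have hints : Integrable (fun p : ℝ =>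
      ∑ j ∈ Finset.range (n-1), (c (j+1) - c j) * max (p - ((j:ℝ)+1)/n) 0) f :=
    integrable_finset_sum _ hintj
  refine ⟨hab.add hints, ?_⟩
  calc ∫ p, Vfun U0 c n p ∂f
      = (∫ p, (U0 + c 0 * p) ∂f) + ∫ p, (∑ j ∈ Finset.range (n-1),
          (c (j+1) - c j) * max (p - ((j:ℝ)+1)/n) 0) ∂f := by
        rw [← integral_add hab hints]; rfl
    _ = U0 + c 0 * (∫ p, p ∂f) + ∑ j ∈ Finset.range (n-1),
          (c (j+1) - c j) * ∫ p, max (p - ((j:ℝ)+1)/n) 0 ∂f := by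
        rw [integral_add ha hb, integral_const, MeasureTheory.integral_const_mul,
          integral_finset_sum _ hintj]
        simp only [measure_univ, probReal_univ, ENNReal.toReal_one, smul_eq_mul, one_mul]
        congr 1
        exact Finset.sum_congr rfl fun j hj => MeasureTheory.integral_const_mul (c (j+1) - c j) _

lemma upper_bound {f1 f2 : Measure ℝ} [IsProbabilityMeasure f1] [IsProbabilityMeasure f2]
    (h1 : f1 (Icc 0 1) = 1) (h2 : f2 (Icc 0 1) = 1)
    (hmean : ∫ p, p ∂f1 = ∫ p, p ∂f2) {M : ℝ} (hM0 : 0 ≤ M)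
    (hD : ∀ t ∈ Icc (0:ℝ) 1,
      (∫ u in (0:ℝ)..t, cdf f1 u) - (∫ u in (0:ℝ)..t, cdf f2 u) ≤ M)
    {U : ℝ → ℝ} (hUc : ConvexOn ℝ (Icc 0 1) U) (hUl : LipschitzOnWith 1 U (Icc 0 1)) :
    (∫ p, U p ∂f1) - (∫ p, U p ∂f2) ≤ 2 * M := by
  have key : ∀ n : ℕ, 1 ≤ n → (∫ p, U p ∂f1) - (∫ p, U p ∂f2) ≤ 2 * M + 4 / n := by
    intro n hn
    have hn0 : (0:ℝ) < n := by exact_mod_cast hn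
    set c : ℕ → ℝ := fun k => n * (U (((k:ℝ)+1)/n) - U ((k:ℝ)/n)) with hcdef
    have hc : ∀ k, c k = n * (U (((k:ℝ)+1)/n) - U ((k:ℝ)/n)) := fun k => rfl
    obtain ⟨hVi1, hVint1⟩ := Vfun_integral f1 h1 hn (U 0) c
    obtain ⟨hVi2, hVint2⟩ := Vfun_integral f2 h2 hn (U 0) c
    have hmemj : ∀ j ∈ Finset.range (n-1), (((j:ℝ)+1)/n) ∈ Icc (0:ℝ) 1 := by
      intro j hj
      have hj1 : j + 1 ≤ n := by have := Finset.mem_range.1 hj; omega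
      exact node_mem hn (by positivity) (by exact_mod_cast hj1)
    have hdiffV : (∫ p, Vfun (U 0) c n p ∂f1) - ∫ p, Vfun (U 0) c n p ∂f2
        = ∑ j ∈ Finset.range (n-1), (c (j+1) - c j) *
            ((∫ u in (0:ℝ)..(((j:ℝ)+1)/n), cdf f1 u)
              - ∫ u in (0:ℝ)..(((j:ℝ)+1)/n), cdf f2 u) := by
      rw [hVint1, hVint2, hmean]
      have hterm : ∀ j ∈ Finset.range (n-1), (c (j+1) - c j) *
          ((∫ u in (0:ℝ)..(((j:ℝ)+1)/n), cdf f1 u)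
            - ∫ u in (0:ℝ)..(((j:ℝ)+1)/n), cdf f2 u)
          = (c (j+1) - c j) * (∫ p, max (p - ((j:ℝ)+1)/n) 0 ∂f1)
            - (c (j+1) - c j) * (∫ p, max (p - ((j:ℝ)+1)/n) 0 ∂f2) := by
        intro j hj
        rw [← diff_integral_max h1 h2 hmean (hmemj j hj)]
        ring
      rw [Finset.sum_congr rfl hterm, Finset.sum_sub_distrib]
      ring
    have hsumle : ∑ j ∈ Finset.range (n-1), (c (j+1) - c j) *
        ((∫ u in (0:ℝ)..(((j:ℝ)+1)/n), cdf f1 u)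
          - ∫ u in (0:ℝ)..(((j:ℝ)+1)/n), cdf f2 u) ≤ 2 * M := by
      calc ∑ j ∈ Finset.range (n-1), (c (j+1) - c j) *
          ((∫ u in (0:ℝ)..(((j:ℝ)+1)/n), cdf f1 u)
            - ∫ u in (0:ℝ)..(((j:ℝ)+1)/n), cdf f2 u)
          ≤ ∑ j ∈ Finset.range (n-1), (c (j+1) - c j) * M := by
            refine Finset.sum_le_sum fun j hj => ?_
            have hj2 : j + 2 ≤ n := by have := Finset.mem_range.1 hj; omega
            have hco : 0 ≤ c (j+1) - c j := by
              have hmono := cb_mono hUc hn hj2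
              rw [sub_nonneg, hc j, hc (j+1)]
              push_cast
              have e : ((j:ℝ)+1)+1 = (j:ℝ)+2 := by ring
              rw [e]
              exact hmono
            exact mul_le_mul_of_nonneg_left (hD _ (hmemj j hj)) hco
        _ = (c (n-1) - c 0) * M := by rw [← Finset.sum_mul, Finset.sum_range_sub]
        _ ≤ 2 * M := by
            have hb1 := abs_le.1 (by rw [hc] at *; exact cb_abs hUl hn (by omega) : |c (n-1)| ≤ 1)
            have hb2 := abs_le.1 (by rw [hc] at *; exact cb_abs hUl hn hn : |c 0| ≤ 1)
            have : c (n-1) - c 0 ≤ 2 := by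
              obtain ⟨_, hx⟩ := hb1; obtain ⟨hy, _⟩ := hb2; linarith
            exact mul_le_mul_of_nonneg_right this hM0
    have happrox1 : |(∫ p, U p ∂f1) - ∫ p, Vfun (U 0) c n p ∂f1| ≤ 2/n := by
      rw [← integral_sub (integrable_lips f1 h1 hUl) hVi1]
      have hb := norm_integral_le_of_norm_le_const (μ := f1)
        (f := fun p => U p - Vfun (U 0) c n p) (C := 2/n)
        ((ae_mem_Icc' f1 h1).mono fun p hp => by
          rw [Real.norm_eq_abs]; exact Vfun_approx hn hUl c hc hp)
      simpa [Real.norm_eq_abs, measure_univ] using hb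
    have happrox2 : |(∫ p, U p ∂f2) - ∫ p, Vfun (U 0) c n p ∂f2| ≤ 2/n := by
      rw [← integral_sub (integrable_lips f2 h2 hUl) hVi2]
      have hb := norm_integral_le_of_norm_le_const (μ := f2)
        (f := fun p => U p - Vfun (U 0) c n p) (C := 2/n)
        ((ae_mem_Icc' f2 h2).mono fun p hp => by
          rw [Real.norm_eq_abs]; exact Vfun_approx hn hUl c hc hp)
      simpa [Real.norm_eq_abs, measure_univ] using hb
    have ha1 := abs_le.1 happrox1
    have ha2 := abs_le.1 happrox2
    have hVle : (∫ p, Vfun (U 0) c n p ∂f1) - ∫ p, Vfun (U 0) c n p ∂f2 ≤ 2 * M := by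
      rw [hdiffV]; exact hsumle
    obtain ⟨hx1, hx2⟩ := ha1
    obtain ⟨hy1, hy2⟩ := ha2
    have h4 : 2/(n:ℝ) + 2/(n:ℝ) = 4/(n:ℝ) := by ring
    linarith [hx2, hy1, hVle, h4]
  refine le_of_forall_pos_le_add fun ε hε => ?_
  obtain ⟨n, hnl⟩ := exists_nat_gt (4/ε)
  have hn1 : 1 ≤ n := by
    rcases Nat.eq_zero_or_pos n with h0 | h
    · exfalso
      rw [h0] at hnl
      have : (0:ℝ) < 4/ε := by positivity
      simp at hnl
      linarith
    · exact h
  have hn0 : (0:ℝ) < n := by exact_mod_cast hn1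
  have h4n : 4/(n:ℝ) < ε := by
    rw [div_lt_iff₀ hn0]
    rw [div_lt_iff₀ hε] at hnl
    nlinarith
  exact (key n hn1).trans (by linarith)

/-- SCDF representation: for equal-mean distributions on `[0,1]`, the supremum over 1-Lipschitz
convex `U` of `∫ U df1 - ∫ U df2` equals twice the maximal gap of the integrated CDFs. -/
theorem sup_lipschitz_convex_gap_eq_two_mul_max_scdf_gap
    (f1 f2 : Measure ℝ) [IsProbabilityMeasure f1] [IsProbabilityMeasure f2]
    (h1 : f1 (Set.Icc 0 1) = 1) (h2 : f2 (Set.Icc 0 1) = 1)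
    (hmean : ∫ p, p ∂f1 = ∫ p, p ∂f2) :
    sSup {d : ℝ | ∃ U : ℝ → ℝ, ConvexOn ℝ (Set.Icc 0 1) U ∧
        LipschitzOnWith 1 U (Set.Icc 0 1) ∧
        d = (∫ p in Set.Icc (0:ℝ) 1, U p ∂f1) - ∫ p in Set.Icc (0:ℝ) 1, U p ∂f2}
      = 2 * sSup {g : ℝ | ∃ t ∈ Set.Icc (0:ℝ) 1,
          g = (∫ p in (0:ℝ)..t, cdf f1 p) - ∫ p in (0:ℝ)..t, cdf f2 p} := by
  have hr1 : f1.restrict (Set.Icc 0 1) = f1 :=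
    Measure.restrict_eq_self_of_ae_mem (ae_mem_Icc' f1 h1)
  have hr2 : f2.restrict (Set.Icc 0 1) = f2 :=
    Measure.restrict_eq_self_of_ae_mem (ae_mem_Icc' f2 h2)
  set B : Set ℝ := {g : ℝ | ∃ t ∈ Set.Icc (0:ℝ) 1,
      g = (∫ p in (0:ℝ)..t, cdf f1 p) - ∫ p in (0:ℝ)..t, cdf f2 p} with hBdef
  set A : Set ℝ := {d : ℝ | ∃ U : ℝ → ℝ, ConvexOn ℝ (Set.Icc 0 1) U ∧
      LipschitzOnWith 1 U (Set.Icc 0 1) ∧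
      d = (∫ p in Set.Icc (0:ℝ) 1, U p ∂f1) - ∫ p in Set.Icc (0:ℝ) 1, U p ∂f2} with hAdef
  have hB0 : (0:ℝ) ∈ B := ⟨0, ⟨le_rfl, zero_le_one⟩, by simp⟩
  have hBne : B.Nonempty := ⟨0, hB0⟩
  have hBbdd : BddAbove B := by
    refine ⟨1, fun g hg => ?_⟩
    obtain ⟨t, ht, rfl⟩ := hg
    have hi1 : (∫ p in (0:ℝ)..t, cdf f1 p) ≤ ∫ p in (0:ℝ)..t, (1:ℝ) := by
      refine intervalIntegral.integral_mono_on ht.1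
        ((monotone_cdf f1).intervalIntegrable) intervalIntegrable_const
        fun x _ => cdf_le_one f1 x
    have hi2 : (0:ℝ) ≤ ∫ p in (0:ℝ)..t, cdf f2 p :=
      intervalIntegral.integral_nonneg ht.1 fun u _ => cdf_nonneg f2 u
    have : (∫ p in (0:ℝ)..t, (1:ℝ)) = t := by simp
    rw [this] at hi1
    have := ht.2
    linarith
  set M := sSup B with hM
  have hM0 : 0 ≤ M := le_csSup hBbdd hB0
  have hDle : ∀ t ∈ Set.Icc (0:ℝ) 1,
      (∫ u in (0:ℝ)..t, cdf f1 u) - (∫ u in (0:ℝ)..t, cdf f2 u) ≤ M :=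
    fun t ht => le_csSup hBbdd ⟨t, ht, rfl⟩
  have hupper : ∀ d ∈ A, d ≤ 2 * M := by
    rintro d ⟨U, hUc, hUl, rfl⟩
    rw [hr1, hr2]
    exact upper_bound h1 h2 hmean hM0 hDle hUc hUl
  have hAne : A.Nonempty := by
    refine ⟨0, fun _ => 0, convexOn_const 0 (convex_Icc 0 1),
      ((LipschitzWith.const (0:ℝ)).weaken zero_le_one).lipschitzOnWith, by simp⟩
  have hAbdd : BddAbove A := ⟨2 * M, hupper⟩
  have hle : sSup A ≤ 2 * M := csSup_le hAne hupper
  have hge : 2 * M ≤ sSup A := by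
    have hmem : ∀ g ∈ B, 2 * g ≤ sSup A := by
      rintro g ⟨t, ht, rfl⟩
      refine le_csSup hAbdd ⟨fun p => |p - t|, ?_, ?_, ?_⟩
      · simpa [Real.dist_eq] using convexOn_dist t (convex_Icc (0:ℝ) 1)
      · have : LipschitzWith 1 (fun p : ℝ => |p - t|) := by
          simpa [Real.dist_eq] using LipschitzWith.dist_left (α := ℝ) t
        exact this.lipschitzOnWith
      · rw [hr1, hr2]
        exact (diff_integral_abs h1 h2 hmean ht).symm
    have : M ≤ sSup A / 2 := csSup_le hBne fun g hg => by linarith [hmem g hg]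
    linarith
  have : sSup A = 2 * M := le_antisymm hle hge
  exact this
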